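/- There exist two 6-dimensional complex solvable Lie algebras L₁ and L₂ with ordered bases such that their characteristic polynomials coincide, namely Q_{L₁}(z₀, …, z₆) = Q_{L₂}(z₀, …, z₆) = z₀³·(z₀ + z₆)³ (so in particular L₁ and L₂ are spectrally equivalent), while dim [L₁, L₁] = 3 and dim [L₂, L₂] = 4; consequently L₁ and L₂ are not isomorphic as Lie algebras. -/

import Mathlib

/-- The characteristic polynomial `Q_L(z₀, …, z_N) = det (z₀ I + z₁ ad x₁ + ⋯ + z_N ad x_N)`
of an `N`-dimensional complex Lie algebra with ordered basis `(x₁, …, x_N)`; the variable of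
index `0` is `z₀` and the variable of index `k.succ` is attached to the basis vector `x_k`. -/
noncomputable def lieCharPoly (N : ℕ) (L : Type) [LieRing L] [LieAlgebra ℂ L]
    (b : Module.Basis (Fin N) ℂ L) : MvPolynomial (Fin (N + 1)) ℂ :=
  Matrix.det
    ((MvPolynomial.X 0 : MvPolynomial (Fin (N + 1)) ℂ) •
        (1 : Matrix (Fin N) (Fin N) (MvPolynomial (Fin (N + 1)) ℂ)) +
      ∑ k : Fin N,
        (MvPolynomial.X k.succ : MvPolynomial (Fin (N + 1)) ℂ) •
          ((LinearMap.toMatrix b b (LieAlgebra.ad ℂ L (b k))).map (MvPolynomial.C)))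

/-- `k(Q)`: the number of distinct irreducible factors of `Q` up to scalar multiples, i.e. the
cardinality of the set of associate classes of irreducible polynomials dividing `Q`. -/
noncomputable def numIrreducibleFactors {σ : Type} (Q : MvPolynomial σ ℂ) : ℕ :=
  {a : Associates (MvPolynomial σ ℂ) | Irreducible a ∧ a ∣ Associates.mk Q}.ncard

/-- A complex solvable Lie algebra together with an ordered basis indexed by `Fin N`. -/
structure SolvableLieAlgWithBasis (N : ℕ) where
  carrier : Type
  [lieRing : LieRing carrier]
  [lieAlgebra : LieAlgebra ℂ carrier]
  solvable : LieAlgebra.IsSolvable carrier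
  basis : Module.Basis (Fin N) ℂ carrier

attribute [instance] SolvableLieAlgWithBasis.lieRing SolvableLieAlgWithBasis.lieAlgebra

noncomputable section

open MvPolynomial

/-! Auxiliary construction -/

def Lt (_t : ℂ) : Type := Fin 6 → ℂ

namespace Lt

variable {t : ℂ}

instance : AddCommGroup (Lt t) := inferInstanceAs (AddCommGroup (Fin 6 → ℂ))
instance : Module ℂ (Lt t) := inferInstanceAs (Module ℂ (Fin 6 → ℂ))
instance : Module.Finite ℂ (Lt t) := inferInstanceAs (Module.Finite ℂ (Fin 6 → ℂ))

def br (t : ℂ) (v w : Lt t) : Lt t :=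
  ![v 5 * w 0 - w 5 * v 0, v 5 * w 1 - w 5 * v 1, v 5 * w 2 - w 5 * v 2,
    t * (v 5 * w 4 - w 5 * v 4), 0, 0]

@[simp] lemma add_apply (v w : Lt t) (i : Fin 6) : (v + w) i = v i + w i := rfl
@[simp] lemma smul_apply (c : ℂ) (v : Lt t) (i : Fin 6) : (c • v) i = c * v i := rfl
@[simp] lemma zero_apply (i : Fin 6) : (0 : Lt t) i = 0 := rfl

@[simp] lemma br_apply_0 (v w : Lt t) : br t v w 0 = v 5 * w 0 - w 5 * v 0 := rfl
@[simp] lemma br_apply_1 (v w : Lt t) : br t v w 1 = v 5 * w 1 - w 5 * v 1 := rfl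
@[simp] lemma br_apply_2 (v w : Lt t) : br t v w 2 = v 5 * w 2 - w 5 * v 2 := rfl
@[simp] lemma br_apply_3 (v w : Lt t) : br t v w 3 = t * (v 5 * w 4 - w 5 * v 4) := rfl
@[simp] lemma br_apply_4 (v w : Lt t) : br t v w 4 = 0 := rfl
@[simp] lemma br_apply_5 (v w : Lt t) : br t v w 5 = 0 := rfl

instance : LieRing (Lt t) where
  bracket := br t
  add_lie x y z := by funext i; fin_cases i <;> simp <;> ring
  lie_add x y z := by funext i; fin_cases i <;> simp <;> ring
  lie_self x := by funext i; fin_cases i <;> simp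
  leibniz_lie x y z := by funext i; fin_cases i <;> simp <;> ring

@[simp] lemma bracket_def (v w : Lt t) : ⁅v, w⁆ = br t v w := rfl

instance : LieAlgebra ℂ (Lt t) where
  lie_smul c x y := by funext i; fin_cases i <;> simp <;> ring

def bas : Module.Basis (Fin 6) ℂ (Lt t) := Pi.basisFun ℂ (Fin 6)

def E (i : Fin 6) : Lt t := Pi.single i 1

@[simp] lemma E_apply (i j : Fin 6) : (E i : Lt t) j = if j = i then 1 else 0 :=
  Pi.single_apply i 1 j

@[simp] lemma bas_apply (i : Fin 6) : (bas i : Lt t) = E i := by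
  funext j
  rw [show (bas i : Lt t) j = (Pi.basisFun ℂ (Fin 6) i) j from rfl, Pi.basisFun_apply]
  rfl

@[simp] lemma bas_repr (v : Lt t) (i : Fin 6) : (bas (t := t)).repr v i = v i :=
  Pi.basisFun_repr ℂ (Fin 6) v i

lemma D1_eq : LieAlgebra.derivedSeries ℂ (Lt t) 1 =
    ⁅(⊤ : LieIdeal ℂ (Lt t)), (⊤ : LieIdeal ℂ (Lt t))⁆ := by
  rw [LieAlgebra.derivedSeries_def, LieAlgebra.derivedSeriesOfIdeal_succ,
    LieAlgebra.derivedSeriesOfIdeal_zero]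

lemma D1_apply5 {x : Lt t} (hx : x ∈ LieAlgebra.derivedSeries ℂ (Lt t) 1) : x 5 = 0 := by
  rw [D1_eq] at hx
  rw [← LieSubmodule.mem_toSubmodule, LieSubmodule.lieIdeal_oper_eq_linear_span'] at hx
  refine Submodule.span_induction ?_ ?_ ?_ ?_ hx
  · rintro _ ⟨x, -, y, -, rfl⟩; simp
  · rfl
  · intro a b _ _ ha hb; simp [ha, hb]
  · intro c a _ ha; simp [ha]

instance : LieAlgebra.IsSolvable (Lt t) := by
  rw [LieAlgebra.isSolvable_iff ℂ]
  refine ⟨2, ?_⟩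
  rw [show (2 : ℕ) = 1 + 1 from rfl, LieAlgebra.derivedSeries_def,
    LieAlgebra.derivedSeriesOfIdeal_succ, ← LieAlgebra.derivedSeries_def,
    eq_bot_iff, LieSubmodule.lieIdeal_oper_eq_span, LieSubmodule.lieSpan_le]
  rintro m ⟨⟨x, hx⟩, ⟨y, hy⟩, rfl⟩
  have hb : ⁅x, y⁆ = (0 : Lt t) := by
    funext i; fin_cases i <;> simp [D1_apply5 hx, D1_apply5 hy]
  simp [hb]

/-! The characteristic polynomial -/

def cm (t : ℂ) : Matrix (Fin 6) (Fin 6) (MvPolynomial (Fin 7) ℂ) :=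
  (X 0 : MvPolynomial (Fin 7) ℂ) • (1 : Matrix (Fin 6) (Fin 6) (MvPolynomial (Fin 7) ℂ)) +
    ∑ k : Fin 6, (X k.succ : MvPolynomial (Fin 7) ℂ) •
      ((LinearMap.toMatrix (bas (t := t)) bas (LieAlgebra.ad ℂ (Lt t) (bas k))).map C)

lemma cm_entry (i j : Fin 6) :
    cm t i j = (if i = j then X 0 else 0) +
      ∑ k : Fin 6, X k.succ * C (br t (E k) (E j) i) := by
  simp [cm, Matrix.add_apply, Matrix.sum_apply, Matrix.smul_apply, Matrix.one_apply,
    LinearMap.toMatrix_apply, LieAlgebra.ad_apply, Matrix.map_apply, smul_eq_mul,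
    mul_ite, mul_one, mul_zero]

lemma charPoly_eq :
    (cm t).det = (X 0 : MvPolynomial (Fin 7) ℂ) ^ 3 * (X 0 + X 6) ^ 3 := by
  rw [Matrix.det_of_upperTriangular (by
    intro i j hij
    fin_cases i <;> fin_cases j <;>
      first
        | exact absurd hij (by decide)
        | (rw [cm_entry]; simp [Fin.sum_univ_six]))]
  rw [Fin.prod_univ_six]
  simp only [cm_entry]
  simp [Fin.sum_univ_six, show Fin.succ 5 = (6 : Fin 7) from rfl]
  ring


/-! Derived algebra dimensions -/

lemma lie_E5_E0 : ⁅(E 5 : Lt t), (E 0 : Lt t)⁆ = E 0 := by funext j; fin_cases j <;> simp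
lemma lie_E5_E1 : ⁅(E 5 : Lt t), (E 1 : Lt t)⁆ = E 1 := by funext j; fin_cases j <;> simp
lemma lie_E5_E2 : ⁅(E 5 : Lt t), (E 2 : Lt t)⁆ = E 2 := by funext j; fin_cases j <;> simp
lemma lie_E5_E4 : ⁅(E 5 : Lt 1), (E 4 : Lt 1)⁆ = E 3 := by funext j; fin_cases j <;> simp

lemma E_mem_D1 (i : Fin 6) (hi : ⁅(E 5 : Lt t), (E i : Lt t)⁆ = E i) :
    (E i : Lt t) ∈ LieAlgebra.derivedSeries ℂ (Lt t) 1 := by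
  rw [D1_eq, ← hi]
  exact LieSubmodule.lie_mem_lie (LieSubmodule.mem_top _) (LieSubmodule.mem_top _)

def f3 : Fin 3 → Lt 0 := ![E 0, E 1, E 2]
def f4 : Fin 4 → Lt 1 := ![E 0, E 1, E 2, E 3]

lemma D1coe_eq0 : LieSubmodule.toSubmodule (LieAlgebra.derivedSeries ℂ (Lt 0) 1) =
    Submodule.span ℂ (Set.range f3) := by
  apply le_antisymm
  · rw [D1_eq, LieSubmodule.lieIdeal_oper_eq_linear_span']
    apply Submodule.span_le.2
    rintro _ ⟨x, -, y, -, rfl⟩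
    have hxy : ⁅x, y⁆ = (⁅x, y⁆ 0) • f3 0 + ((⁅x, y⁆ 1) • f3 1 + (⁅x, y⁆ 2) • f3 2) := by
      funext j; fin_cases j <;> simp [f3]
    rw [hxy]
    exact Submodule.add_mem _ (Submodule.smul_mem _ _ (Submodule.subset_span ⟨0, rfl⟩))
      (Submodule.add_mem _ (Submodule.smul_mem _ _ (Submodule.subset_span ⟨1, rfl⟩))
        (Submodule.smul_mem _ _ (Submodule.subset_span ⟨2, rfl⟩)))
  · apply Submodule.span_le.2
    rintro _ ⟨i, rfl⟩
    rw [SetLike.mem_coe, LieSubmodule.mem_toSubmodule]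
    fin_cases i
    · exact E_mem_D1 0 lie_E5_E0
    · exact E_mem_D1 1 lie_E5_E1
    · exact E_mem_D1 2 lie_E5_E2

lemma D1coe_eq1 : LieSubmodule.toSubmodule (LieAlgebra.derivedSeries ℂ (Lt 1) 1) =
    Submodule.span ℂ (Set.range f4) := by
  apply le_antisymm
  · rw [D1_eq, LieSubmodule.lieIdeal_oper_eq_linear_span']
    apply Submodule.span_le.2
    rintro _ ⟨x, -, y, -, rfl⟩
    have hxy : ⁅x, y⁆ = (⁅x, y⁆ 0) • f4 0 + ((⁅x, y⁆ 1) • f4 1 +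
        ((⁅x, y⁆ 2) • f4 2 + (⁅x, y⁆ 3) • f4 3)) := by
      funext j; fin_cases j <;> simp [f4]
    rw [hxy]
    exact Submodule.add_mem _ (Submodule.smul_mem _ _ (Submodule.subset_span ⟨0, rfl⟩))
      (Submodule.add_mem _ (Submodule.smul_mem _ _ (Submodule.subset_span ⟨1, rfl⟩))
        (Submodule.add_mem _ (Submodule.smul_mem _ _ (Submodule.subset_span ⟨2, rfl⟩))
          (Submodule.smul_mem _ _ (Submodule.subset_span ⟨3, rfl⟩))))
  · apply Submodule.span_le.2
    rintro _ ⟨i, rfl⟩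
    rw [SetLike.mem_coe, LieSubmodule.mem_toSubmodule]
    fin_cases i
    · exact E_mem_D1 0 lie_E5_E0
    · exact E_mem_D1 1 lie_E5_E1
    · exact E_mem_D1 2 lie_E5_E2
    · have h := LieSubmodule.lie_mem_lie (I := (⊤ : LieIdeal ℂ (Lt 1)))
        (N := (⊤ : LieIdeal ℂ (Lt 1))) (LieSubmodule.mem_top (E 5)) (LieSubmodule.mem_top (E 4))
      rw [lie_E5_E4] at h
      rw [D1_eq]
      exact h

lemma fr0 : Module.finrank ℂ ↥(LieAlgebra.derivedSeries ℂ (Lt 0) 1) = 3 := by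
  have hind : LinearIndependent ℂ f3 := by
    have hf : f3 = (bas (t := 0)) ∘ ![0, 1, 2] := by
      funext i; fin_cases i <;> simp [f3]
    rw [hf]
    exact (bas (t := 0)).linearIndependent.comp _ (by decide)
  have h := finrank_span_eq_card hind
  have : Module.finrank ℂ ↥(LieAlgebra.derivedSeries ℂ (Lt 0) 1) =
      Module.finrank ℂ ↥(LieSubmodule.toSubmodule (LieAlgebra.derivedSeries ℂ (Lt 0) 1)) := rfl
  rw [this, D1coe_eq0, h]
  simp

lemma fr1 : Module.finrank ℂ ↥(LieAlgebra.derivedSeries ℂ (Lt 1) 1) = 4 := by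
  have hind : LinearIndependent ℂ f4 := by
    have hf : f4 = (bas (t := 1)) ∘ ![0, 1, 2, 3] := by
      funext i; fin_cases i <;> simp [f4]
    rw [hf]
    exact (bas (t := 1)).linearIndependent.comp _ (by decide)
  have h := finrank_span_eq_card hind
  have : Module.finrank ℂ ↥(LieAlgebra.derivedSeries ℂ (Lt 1) 1) =
      Module.finrank ℂ ↥(LieSubmodule.toSubmodule (LieAlgebra.derivedSeries ℂ (Lt 1) 1)) := rfl
  rw [this, D1coe_eq1, h]
  simp

lemma lieCP : lieCharPoly 6 (Lt t) bas =
    (X 0 : MvPolynomial (Fin 7) ℂ) ^ 3 * (X 0 + X 6) ^ 3 := by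
  have : lieCharPoly 6 (Lt t) bas = (cm t).det := by
    unfold lieCharPoly cm
    set_option maxRecDepth 2000 in congr 1
  rw [this, charPoly_eq]

end Lt

end


/-- There exist two 6-dimensional complex solvable Lie algebras `L₁`, `L₂`
with ordered bases whose characteristic polynomials are both `z₀³ (z₀ + z₆)³` (so `L₁` and `L₂`
are spectrally equivalent), while `dim [L₁, L₁] = 3` and `dim [L₂, L₂] = 4`; consequently `L₁`
and `L₂` are not isomorphic as Lie algebras. -/
theorem exists_spectrally_equivalent_not_isomorphic :
    ∃ A₁ A₂ : SolvableLieAlgWithBasis 6,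
      lieCharPoly 6 A₁.carrier A₁.basis =
        (MvPolynomial.X 0 : MvPolynomial (Fin 7) ℂ) ^ 3 *
          (MvPolynomial.X 0 + MvPolynomial.X 6) ^ 3 ∧
      lieCharPoly 6 A₂.carrier A₂.basis =
        (MvPolynomial.X 0 : MvPolynomial (Fin 7) ℂ) ^ 3 *
          (MvPolynomial.X 0 + MvPolynomial.X 6) ^ 3 ∧
      Module.finrank ℂ ↥(LieAlgebra.derivedSeries ℂ A₁.carrier 1) = 3 ∧
      Module.finrank ℂ ↥(LieAlgebra.derivedSeries ℂ A₂.carrier 1) = 4 ∧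
      IsEmpty (A₁.carrier ≃ₗ⁅ℂ⁆ A₂.carrier) := by
  refine ⟨{ carrier := Lt 0, solvable := inferInstance, basis := Lt.bas },
          { carrier := Lt 1, solvable := inferInstance, basis := Lt.bas },
          ?_, ?_, Lt.fr0, Lt.fr1, ?_⟩
  · exact Lt.lieCP
  · exact Lt.lieCP
  · constructor
    intro e
    have hs : Function.Surjective e.toLieHom := e.surjective
    have h := LieIdeal.derivedSeries_map_eq (f := e.toLieHom) 1 hs
    have hcoe := LieIdeal.coe_map_of_surjective (f := e.toLieHom)
      (I := LieAlgebra.derivedSeries ℂ (Lt 0) 1) hs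
    have h4 : Module.finrank ℂ ↥(LieAlgebra.derivedSeries ℂ (Lt 1) 1) = 3 := by
      rw [← h]
      have hr : Module.finrank ℂ ↥((LieAlgebra.derivedSeries ℂ (Lt 0) 1).map e.toLieHom) =
          Module.finrank ℂ
            ↥(LieSubmodule.toSubmodule ((LieAlgebra.derivedSeries ℂ (Lt 0) 1).map e.toLieHom)) :=
        rfl
      rw [hr, hcoe]
      have hh := LinearEquiv.finrank_map_eq e.toLinearEquiv
        (LieSubmodule.toSubmodule (LieAlgebra.derivedSeries ℂ (Lt 0) 1))
      have hco : (e.toLieHom : Lt 0 →ₗ[ℂ] Lt 1) = (e.toLinearEquiv : Lt 0 →ₗ[ℂ] Lt 1) := rfl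
      rw [hco, hh]
      exact Lt.fr0
    rw [Lt.fr1] at h4
    exact absurd h4 (by norm_num)
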